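/- Let f : ℝ → ℝ be a strictly increasing bijection and let A ⊆ ℝ be a closed, discrete subset that is unbounded above and unbounded below. If f(A) = A and f fixes some point a₀ ∈ A, then f fixes every point of A. -/

import Mathlib

theorem stmt_2 (f : ℝ → ℝ) (hmono : StrictMono f) (hbij : Function.Bijective f)
    (A : Set ℝ) (hclosed : IsClosed A)
    (hdisc : ∀ a ∈ A, ∃ U : Set ℝ, IsOpen U ∧ a ∈ U ∧ U ∩ A = {a})
    (habove : ¬ BddAbove A) (hbelow : ¬ BddBelow A)
    (hinv : f '' A = A) (a₀ : ℝ) (ha₀ : a₀ ∈ A) (hfix : f a₀ = a₀) :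
    ∀ a ∈ A, f a = a := by
  have hinj := hbij.1
  have hfa : ∀ x ∈ A, f x ∈ A := fun x hx => hinv ▸ Set.mem_image_of_mem f hx
  have hpre : ∀ y ∈ A, ∃ x ∈ A, f x = y := by
    intro y hy
    rw [← hinv] at hy
    obtain ⟨x, hx, hxy⟩ := hy
    exact ⟨x, hx, hxy⟩
  -- A is a discrete subspace
  have hdiscA : DiscreteTopology A := by
    rw [discreteTopology_iff_isOpen_singleton]
    intro a
    obtain ⟨U, hU, haU, hUA⟩ := hdisc a a.2
    refine ⟨U, hU, ?_⟩
    ext x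
    simp only [Set.mem_preimage, Set.mem_singleton_iff]
    constructor
    · intro hx
      have : (x : ℝ) ∈ U ∩ A := ⟨hx, x.2⟩
      rw [hUA] at this
      exact Subtype.ext this
    · rintro rfl; exact haU
  have hfin : ∀ x y : ℝ, (A ∩ Set.Icc x y).Finite := by
    intro x y
    have hc : IsCompact (A ∩ Set.Icc x y) :=
      (isCompact_Icc (a := x) (b := y)).of_isClosed_subset
        (hclosed.inter isClosed_Icc) Set.inter_subset_right
    have hd : DiscreteTopology ↥(A ∩ Set.Icc x y) :=
      hdiscA.of_subset Set.inter_subset_left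
    exact hc.finite (isDiscrete_iff_discreteTopology.mpr hd)
  have hle : ∀ x, a₀ ≤ f x ↔ a₀ ≤ x := by
    intro x
    conv_lhs => rw [← hfix]
    rw [hmono.le_iff_le]
  have himg1 : ∀ a, f '' (A ∩ Set.Icc a₀ a) = A ∩ Set.Icc a₀ (f a) := by
    intro a
    ext y
    simp only [Set.mem_image, Set.mem_inter_iff, Set.mem_Icc]
    constructor
    · rintro ⟨x, ⟨hxA, hx1, hx2⟩, rfl⟩
      exact ⟨hfa x hxA, (hle x).2 hx1, hmono.le_iff_le.2 hx2⟩
    · rintro ⟨hyA, hy1, hy2⟩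
      obtain ⟨x, hxA, rfl⟩ := hpre y hyA
      exact ⟨x, ⟨hxA, (hle x).1 hy1, hmono.le_iff_le.1 hy2⟩, rfl⟩
  have hge : ∀ x, f x ≤ a₀ ↔ x ≤ a₀ := by
    intro x
    conv_lhs => rw [← hfix]
    rw [hmono.le_iff_le]
  have himg2 : ∀ a, f '' (A ∩ Set.Icc a a₀) = A ∩ Set.Icc (f a) a₀ := by
    intro a
    ext y
    simp only [Set.mem_image, Set.mem_inter_iff, Set.mem_Icc]
    constructor
    · rintro ⟨x, ⟨hxA, hx1, hx2⟩, rfl⟩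
      exact ⟨hfa x hxA, hmono.le_iff_le.2 hx1, (hge x).2 hx2⟩
    · rintro ⟨hyA, hy1, hy2⟩
      obtain ⟨x, hxA, rfl⟩ := hpre y hyA
      exact ⟨x, ⟨hxA, hmono.le_iff_le.1 hy1, (hge x).1 hy2⟩, rfl⟩
  intro a ha
  rcases le_total a₀ a with h | h
  · -- a₀ ≤ a
    have hfa₀ : a₀ ≤ f a := (hle a).2 h
    have hcard : (A ∩ Set.Icc a₀ a).ncard = (A ∩ Set.Icc a₀ (f a)).ncard := by
      rw [← himg1 a, Set.ncard_image_of_injective _ hinj]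
    rcases lt_trichotomy (f a) a with hlt | heq | hgt
    · exfalso
      have hss : A ∩ Set.Icc a₀ (f a) ⊂ A ∩ Set.Icc a₀ a := by
        constructor
        · exact Set.inter_subset_inter_right _ (Set.Icc_subset_Icc le_rfl hlt.le)
        · intro hsub
          have := (hsub ⟨ha, h, le_rfl⟩).2.2
          exact absurd this (not_le.2 hlt)
      have := Set.ncard_lt_ncard hss (hfin a₀ a)
      omega
    · exact heq
    · exfalso
      have hss : A ∩ Set.Icc a₀ a ⊂ A ∩ Set.Icc a₀ (f a) := by
        constructor
        · exact Set.inter_subset_inter_right _ (Set.Icc_subset_Icc le_rfl hgt.le)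
        · intro hsub
          have := (hsub ⟨hfa a ha, hfa₀, le_rfl⟩).2.2
          exact absurd this (not_le.2 hgt)
      have := Set.ncard_lt_ncard hss (hfin a₀ (f a))
      omega
  · -- a ≤ a₀
    have hfa₀ : f a ≤ a₀ := (hge a).2 h
    have hcard : (A ∩ Set.Icc a a₀).ncard = (A ∩ Set.Icc (f a) a₀).ncard := by
      rw [← himg2 a, Set.ncard_image_of_injective _ hinj]
    rcases lt_trichotomy (f a) a with hlt | heq | hgt
    · exfalso
      have hss : A ∩ Set.Icc a a₀ ⊂ A ∩ Set.Icc (f a) a₀ := by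
        constructor
        · exact Set.inter_subset_inter_right _ (Set.Icc_subset_Icc hlt.le le_rfl)
        · intro hsub
          have := (hsub ⟨hfa a ha, le_rfl, hfa₀⟩).2.1
          exact absurd this (not_le.2 hlt)
      have := Set.ncard_lt_ncard hss (hfin (f a) a₀)
      omega
    · exact heq
    · exfalso
      have hss : A ∩ Set.Icc (f a) a₀ ⊂ A ∩ Set.Icc a a₀ := by
        constructor
        · exact Set.inter_subset_inter_right _ (Set.Icc_subset_Icc hgt.le le_rfl)
        · intro hsub
          have := (hsub ⟨ha, le_rfl, h⟩).2.1
          exact absurd this (not_le.2 hgt)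
      have := Set.ncard_lt_ncard hss (hfin a a₀)
      omega
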